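/- Let f, f' ∈ Surj(m,n) with proj(f) = proj(f') and g, g' ∈ Surj(l,m) with proj(g) = proj(g'). Then the multiset {proj(f ∘ σ ∘ g) : σ ∈ S_m} equals the multiset {proj(f' ∘ σ ∘ g') : σ ∈ S_m}, where σ ranges over all permutations of {1,…,m} counted once each. -/

import Mathlib

/-- The multiset of fiber cardinalities of a map `f : Fin a → Fin b`. -/
def proj {a b : ℕ} (f : Fin a → Fin b) : Multiset ℕ :=
  Multiset.map (fun i : Fin b => (Finset.univ.filter fun j => f j = i).card)
    (Finset.univ : Finset (Fin b)).val

lemma exists_perm_comp {n : ℕ} {c c' : Fin n → ℕ}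
    (h : (↑(List.ofFn c) : Multiset ℕ) = ↑(List.ofFn c')) :
    ∃ e : Equiv.Perm (Fin n), c' = c ∘ e := by
  have hperm : (List.ofFn c).Perm (List.ofFn c') := Quotient.exact h
  have h1 : List.ofFn (c ∘ Tuple.sort c) = List.ofFn (c' ∘ Tuple.sort c') := by
    exact List.Perm.eq_of_sortedLE
      ((Tuple.monotone_sort c).sortedLE_ofFn) ((Tuple.monotone_sort c').sortedLE_ofFn)
      (((Tuple.sort c).ofFn_comp_perm c).trans
        (hperm.trans ((Tuple.sort c').ofFn_comp_perm c').symm))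
  have h2 : c ∘ Tuple.sort c = c' ∘ Tuple.sort c' := List.ofFn_injective h1
  refine ⟨Tuple.sort c * (Tuple.sort c')⁻¹, ?_⟩
  funext i
  have := congrFun h2 ((Tuple.sort c')⁻¹ i)
  simpa using this.symm

lemma exists_equiv_of_proj_eq {a b : ℕ} {f f' : Fin a → Fin b} (h : proj f = proj f') :
    ∃ (e : Equiv.Perm (Fin b)) (d : Equiv.Perm (Fin a)), f ∘ d = e ∘ f' := by
  have h' : (↑(List.ofFn fun i : Fin b => (Finset.univ.filter fun j => f j = i).card) :
      Multiset ℕ) = ↑(List.ofFn fun i : Fin b => (Finset.univ.filter fun j => f' j = i).card) := by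
    rw [← Fin.univ_val_map, ← Fin.univ_val_map]; exact h
  obtain ⟨e, he⟩ := exists_perm_comp h'
  have hcard : ∀ i : Fin b, Fintype.card {j // f' j = i} = Fintype.card {j // f j = e i} := by
    intro i
    rw [Fintype.card_subtype, Fintype.card_subtype]
    exact congrFun he i
  let F : ∀ i : Fin b, {j // f' j = i} ≃ {j // f j = e i} := fun i =>
    Fintype.equivOfCardEq (hcard i)
  let d : Fin a ≃ Fin a :=
    (Equiv.sigmaFiberEquiv f').symm.trans
      ((Equiv.sigmaCongr e F).trans (Equiv.sigmaFiberEquiv f))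
  refine ⟨e, d, ?_⟩
  funext j
  show f (d j) = e (f' j)
  have hd : d j = ↑(F (f' j) ⟨j, rfl⟩) := rfl
  rw [hd]
  exact (F (f' j) ⟨j, rfl⟩).2

lemma proj_comp_right {a b : ℕ} (f : Fin a → Fin b) (d : Equiv.Perm (Fin a)) :
    proj (f ∘ d) = proj f := by
  unfold proj
  refine Multiset.map_congr rfl fun i _ => ?_
  refine Finset.card_bij (fun j _ => d j) ?_ ?_ ?_
  · intro j hj
    simp only [Finset.mem_filter, Finset.mem_univ, true_and] at hj ⊢
    exact hj
  · intro j₁ _ j₂ _ hj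
    exact d.injective hj
  · intro j hj
    simp only [Finset.mem_filter, Finset.mem_univ, true_and] at hj ⊢
    exact ⟨d.symm j, by simpa using hj, by simp⟩

lemma map_univ_val_equiv {α : Type*} [Fintype α] [DecidableEq α] (e : α ≃ α) :
    Multiset.map e (Finset.univ : Finset α).val = (Finset.univ : Finset α).val := by
  have := congrArg Finset.val (Finset.map_univ_equiv e)
  rwa [Finset.map_val] at this

lemma proj_comp_left {a b : ℕ} (f : Fin a → Fin b) (e : Equiv.Perm (Fin b)) :
    proj (e ∘ f) = proj f := by
  unfold proj
  have h1 : ∀ i : Fin b, (Finset.univ.filter fun j => (e ∘ f) j = i) =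
      Finset.univ.filter fun j => f j = e.symm i := by
    intro i; ext j
    simp [Function.comp, Equiv.apply_eq_iff_eq_symm_apply]
  calc Multiset.map (fun i : Fin b => (Finset.univ.filter fun j => (e ∘ f) j = i).card)
        (Finset.univ : Finset (Fin b)).val
      = Multiset.map ((fun i : Fin b => (Finset.univ.filter fun j => f j = i).card) ∘ e.symm)
        (Finset.univ : Finset (Fin b)).val := by
        refine Multiset.map_congr rfl fun i _ => ?_
        exact congrArg Finset.card (h1 i)
    _ = Multiset.map (fun i : Fin b => (Finset.univ.filter fun j => f j = i).card)
        (Multiset.map e.symm (Finset.univ : Finset (Fin b)).val) := by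
        rw [Multiset.map_map]
    _ = _ := by rw [map_univ_val_equiv]

/-- if `f, f' ∈ Surj(m,n)` have the same fiber-cardinality multiset and
`g, g' ∈ Surj(l,m)` have the same fiber-cardinality multiset, then the multisets
`{proj (f ∘ σ ∘ g) : σ ∈ S_m}` and `{proj (f' ∘ σ ∘ g') : σ ∈ S_m}` coincide. -/
theorem stmt9 {l m n : ℕ}
    (f f' : Fin m → Fin n) (hf : Function.Surjective f) (hf' : Function.Surjective f')
    (hff' : proj f = proj f')
    (g g' : Fin l → Fin m) (hg : Function.Surjective g) (hg' : Function.Surjective g')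
    (hgg' : proj g = proj g') :
    Multiset.map (fun σ : Equiv.Perm (Fin m) => proj (f ∘ ⇑σ ∘ g))
        (Finset.univ : Finset (Equiv.Perm (Fin m))).val =
      Multiset.map (fun σ : Equiv.Perm (Fin m) => proj (f' ∘ ⇑σ ∘ g'))
        (Finset.univ : Finset (Equiv.Perm (Fin m))).val := by
  obtain ⟨ef, df, hef⟩ := exists_equiv_of_proj_eq hff'
  obtain ⟨eg, dg, heg⟩ := exists_equiv_of_proj_eq hgg'
  have hf'eq : ∀ j, f' j = ef.symm (f (df j)) := by
    intro j
    have := congrFun hef j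
    simp only [Function.comp] at this
    rw [this]; simp
  have hg'eq : ∀ j, g' j = eg.symm (g (dg j)) := by
    intro j
    have := congrFun heg j
    simp only [Function.comp] at this
    rw [this]; simp
  set π : Equiv.Perm (Fin m) ≃ Equiv.Perm (Fin m) :=
    (Equiv.mulRight eg⁻¹).trans (Equiv.mulLeft df) with hπ
  have key : ∀ σ : Equiv.Perm (Fin m),
      proj (f' ∘ ⇑σ ∘ g') = proj (f ∘ ⇑(π σ) ∘ g) := by
    intro σ
    have h1 : f' ∘ ⇑σ ∘ g' = ⇑ef.symm ∘ ((f ∘ ⇑(π σ) ∘ g) ∘ ⇑dg) := by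
      funext j
      simp only [Function.comp, hπ, Equiv.trans_apply, Equiv.coe_mulLeft,
        Equiv.coe_mulRight, Equiv.Perm.mul_apply]
      rw [hf'eq, hg'eq]
      simp [Equiv.Perm.inv_def]
    rw [h1, proj_comp_left, proj_comp_right]
  have hfun : (fun σ : Equiv.Perm (Fin m) => proj (f' ∘ ⇑σ ∘ g')) =
      (fun ρ : Equiv.Perm (Fin m) => proj (f ∘ ⇑ρ ∘ g)) ∘ ⇑π := funext key
  rw [hfun, ← Multiset.map_map, map_univ_val_equiv π]
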